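/- Let M and N be finitely generated bigraded F₂[u]-modules, where u is homogeneous of bidegree (−1, −½) (Maslov, Alexander), the Alexander grading takes values in ½ℤ, and both M and N have nonzero rank (i.e., contain non-torsion elements). Define τ(M) = −2·max{A(x) : x a homogeneous non-torsion element of M}. Suppose σ : M → N and μ : N → M are bigraded module maps, each homogeneous of bidegree (−1, −½), with μ∘σ = u²·id_M and σ∘μ = u²·id_N. Then |τ(M) − τ(N)| ≤ 1. -/

import Mathlib

open Polynomial

/-- The set of (doubled) Alexander gradings of homogeneous non-torsion elements of a
bigraded `𝔽₂[u]`-module, whose bigrading (Maslov, twice-Alexander) is given by the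
family `g` of `𝔽₂`-subspaces; `τ` is `−1` times the greatest element of this set
(equivalently, `−2` times the largest Alexander grading of a homogeneous non-torsion
element). -/
def gradedNonTorsion {M : Type} [AddCommGroup M] [Module (Polynomial (ZMod 2)) M]
    [Module (ZMod 2) M] (g : ℤ × ℤ → Submodule (ZMod 2) M) : Set ℤ :=
  {s : ℤ | ∃ (d : ℤ) (x : M), x ∈ g (d, s) ∧ x ∉ Submodule.torsion (Polynomial (ZMod 2)) M}

set_option linter.unusedSectionVars false
section Aux

variable {P : Type} [AddCommGroup P] [Module (Polynomial (ZMod 2)) P] [Module (ZMod 2) P]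
  [IsScalarTower (ZMod 2) (Polynomial (ZMod 2)) P]

/-- decomposition of an element as sum of homogeneous components -/
lemma decomp_sum (g : ℤ × ℤ → Submodule (ZMod 2) P) (hint : DirectSum.IsInternal g) (x : P) :
    ∃ (s : Finset (ℤ × ℤ)) (c : ℤ × ℤ → P), (∀ p ∈ s, c p ∈ g p) ∧ x = ∑ p ∈ s, c p := by
  classical
  set e := LinearEquiv.ofBijective (DirectSum.coeLinearMap g) hint with he
  set y := e.symm x with hy
  refine ⟨DFinsupp.support y, fun p => (y p : P), fun p _ => (y p).2, ?_⟩
  conv_lhs => rw [← e.apply_symm_apply x]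
  have : e y = DirectSum.coeLinearMap g y := rfl
  rw [← hy, this]
  conv_lhs => rw [← DirectSum.sum_support_of y]
  rw [map_sum]
  simp [DirectSum.coeLinearMap_of]

lemma smul_comm_X (c : ZMod 2) (x : P) :
    (X : Polynomial (ZMod 2)) • c • x = c • ((X : Polynomial (ZMod 2)) • x) := by
  rw [← algebraMap_smul (Polynomial (ZMod 2)) c x, ← mul_smul, mul_comm, mul_smul,
    algebraMap_smul]

/-- A `u`-stable `𝔽₂`-subspace is an `𝔽₂[u]`-submodule. -/
def liftSub (W : Submodule (ZMod 2) P)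
    (hX : ∀ w ∈ W, (X : Polynomial (ZMod 2)) • w ∈ W) :
    Submodule (Polynomial (ZMod 2)) P where
  carrier := W
  add_mem' := fun ha hb => W.add_mem ha hb
  zero_mem' := W.zero_mem
  smul_mem' := by
    intro p w hw
    have hXn : ∀ (n : ℕ) (w : P), w ∈ W → (X : Polynomial (ZMod 2)) ^ n • w ∈ W := by
      intro n
      induction n with
      | zero => intro w hw; simpa using hw
      | succ n ih =>
        intro w hw
        rw [pow_succ, mul_smul]
        exact ih _ (hX w hw)
    induction p using Polynomial.induction_on' with
    | add p q hp hq => rw [add_smul]; exact W.add_mem hp hq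
    | monomial n a =>
      have : (monomial n a : Polynomial (ZMod 2)) • w
          = a • ((X : Polynomial (ZMod 2)) ^ n • w) := by
        rw [← C_mul_X_pow_eq_monomial, mul_smul, ← Polynomial.algebraMap_eq, algebraMap_smul]
      rw [this]
      exact W.smul_mem a (hXn n w hw)

/-- The set of gradings of homogeneous non-torsion elements has a greatest element. -/
lemma exists_greatest_gnt [Module.Finite (Polynomial (ZMod 2)) P]
    (g : ℤ × ℤ → Submodule (ZMod 2) P) (hint : DirectSum.IsInternal g)
    (hu : ∀ (p : ℤ × ℤ) (x : P), x ∈ g p →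
      (X : Polynomial (ZMod 2)) • x ∈ g (p.1 - 1, p.2 - 1))
    (hrk : ∃ x : P, x ∉ Submodule.torsion (Polynomial (ZMod 2)) P) :
    ∃ s : ℤ, IsGreatest (gradedNonTorsion g) s := by
  classical
  -- nonempty
  have hne : ∃ z, z ∈ gradedNonTorsion g := by
    obtain ⟨x, hx⟩ := hrk
    obtain ⟨s, c, hc, hsum⟩ := decomp_sum g hint x
    by_contra h
    push_neg at h
    apply hx
    rw [hsum]
    refine Submodule.sum_mem _ fun p hp => ?_
    by_contra hcp
    exact h p.2 ⟨p.1, c p, by simpa using hc p hp, hcp⟩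
  -- bounded above
  have hbdd : ∃ b : ℤ, ∀ z ∈ gradedNonTorsion g, z ≤ b := by
    obtain ⟨T, hTspan⟩ := Module.Finite.fg_top (R := Polynomial (ZMod 2)) (M := P)
    -- choose, for each generator, a decomposition
    choose s c hc hsum using fun m : P => decomp_sum g hint m
    set F : Finset ℤ := T.biUnion (fun m => (s m).image Prod.snd) with hF
    obtain ⟨S, hS⟩ : ∃ S : ℤ, ∀ a ∈ F, a ≤ S := by
      obtain ⟨S, hS⟩ := F.bddAbove
      exact ⟨S, fun a ha => hS ha⟩
    refine ⟨S, fun z hz => ?_⟩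
    by_contra hzS
    push_neg at hzS
    obtain ⟨d, x, hxg, hxt⟩ := hz
    -- the `𝔽₂`-span of the gradings with second coordinate ≤ S
    set W : Submodule (ZMod 2) P := ⨆ q : {q : ℤ × ℤ // q.2 ≤ S}, g q.1 with hW
    have hXW : ∀ w ∈ W, (X : Polynomial (ZMod 2)) • w ∈ W := by
      intro w hw
      refine Submodule.iSup_induction (x := w)
        (motive := fun w => (X : Polynomial (ZMod 2)) • w ∈ W) _ hw ?_ (by simp) ?_
      · rintro ⟨q, hq⟩ y hy
        have := hu q y hy
        exact Submodule.mem_iSup_of_mem ⟨(q.1 - 1, q.2 - 1), by simp; omega⟩ this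
      · intro a b ha hb
        rw [smul_add]
        exact W.add_mem ha hb
    have hWall : ∀ m : P, m ∈ W := by
      have hle : Submodule.span (Polynomial (ZMod 2)) (↑T : Set P) ≤ liftSub W hXW := by
        rw [Submodule.span_le]
        intro m hm
        have hm' : m ∈ T := hm
        show m ∈ W
        rw [hsum m]
        refine Submodule.sum_mem _ fun p hp => ?_
        have hps : p.2 ≤ S := hS p.2 (by
          rw [hF]
          exact Finset.mem_biUnion.mpr ⟨m, hm', Finset.mem_image.mpr ⟨p, hp, rfl⟩⟩)
        exact Submodule.mem_iSup_of_mem ⟨p, hps⟩ (hc m p hp)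
      intro m
      have : m ∈ Submodule.span (Polynomial (ZMod 2)) (↑T : Set P) := by
        rw [hTspan]; trivial
      exact hle this
    -- x lies in both g (d, z) and the sup of the other pieces, hence x = 0
    have hdisj : Disjoint (g (d, z)) (⨆ q ∈ {q : ℤ × ℤ | q.2 ≤ S}, g q) := by
      refine (hint.submodule_iSupIndep).disjoint_biSup ?_
      simp only [Set.mem_setOf_eq]
      omega
    have hxW' : x ∈ ⨆ q ∈ {q : ℤ × ℤ | q.2 ≤ S}, g q := by
      have := hWall x
      rw [hW] at this
      rwa [iSup_subtype] at this
    have hx0 : x = 0 := Submodule.disjoint_def.mp hdisj x hxg hxW'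
    exact hxt (hx0 ▸ (Submodule.torsion (Polynomial (ZMod 2)) P).zero_mem)
  obtain ⟨b, hb⟩ := hbdd
  obtain ⟨ub, hub, hub'⟩ := Int.exists_greatest_of_bdd ⟨b, fun z hz => hb z hz⟩ hne
  exact ⟨ub, hub, fun z hz => hub' z hz⟩

end Aux

/-- Let `M`, `N` be finitely generated bigraded `𝔽₂[u]`-modules of nonzero rank, with
`u` homogeneous of bidegree `(−1, −½)` (here the Alexander grading is doubled, so `u`
has bidegree `(−1, −1)`).  If `σ : M → N` and `μ : N → M` are bigraded module maps of
bidegree `(−1, −½)` (doubled: `(−1, −1)`) with `μ∘σ = u²` and `σ∘μ = u²`, then the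
invariants `τ(M) = −2·max{A(x) : x homogeneous non-torsion}` are defined and satisfy
`|τ(M) − τ(N)| ≤ 1`. -/
theorem abs_tau_sub_tau_le_one {M N : Type} [AddCommGroup M] [AddCommGroup N]
    [Module (Polynomial (ZMod 2)) M] [Module (Polynomial (ZMod 2)) N]
    [Module (ZMod 2) M] [Module (ZMod 2) N]
    [IsScalarTower (ZMod 2) (Polynomial (ZMod 2)) M]
    [IsScalarTower (ZMod 2) (Polynomial (ZMod 2)) N]
    [Module.Finite (Polynomial (ZMod 2)) M] [Module.Finite (Polynomial (ZMod 2)) N]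
    (gM : ℤ × ℤ → Submodule (ZMod 2) M) (gN : ℤ × ℤ → Submodule (ZMod 2) N)
    (hMint : DirectSum.IsInternal gM) (hNint : DirectSum.IsInternal gN)
    (huM : ∀ (p : ℤ × ℤ) (x : M), x ∈ gM p →
      (X : Polynomial (ZMod 2)) • x ∈ gM (p.1 - 1, p.2 - 1))
    (huN : ∀ (p : ℤ × ℤ) (y : N), y ∈ gN p →
      (X : Polynomial (ZMod 2)) • y ∈ gN (p.1 - 1, p.2 - 1))
    (hrkM : ∃ x : M, x ∉ Submodule.torsion (Polynomial (ZMod 2)) M)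
    (hrkN : ∃ y : N, y ∉ Submodule.torsion (Polynomial (ZMod 2)) N)
    (σ : M →ₗ[Polynomial (ZMod 2)] N) (μ : N →ₗ[Polynomial (ZMod 2)] M)
    (hσ : ∀ (p : ℤ × ℤ) (x : M), x ∈ gM p → σ x ∈ gN (p.1 - 1, p.2 - 1))
    (hμ : ∀ (p : ℤ × ℤ) (y : N), y ∈ gN p → μ y ∈ gM (p.1 - 1, p.2 - 1))
    (hμσ : ∀ x : M, μ (σ x) = (X ^ 2 : Polynomial (ZMod 2)) • x)
    (hσμ : ∀ y : N, σ (μ y) = (X ^ 2 : Polynomial (ZMod 2)) • y) :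
    (∃ sM : ℤ, IsGreatest (gradedNonTorsion gM) sM) ∧
    (∃ sN : ℤ, IsGreatest (gradedNonTorsion gN) sN) ∧
    ∀ sM sN : ℤ, IsGreatest (gradedNonTorsion gM) sM →
      IsGreatest (gradedNonTorsion gN) sN → |(-sM) - (-sN)| ≤ 1 := by
  have hX2 : (X ^ 2 : Polynomial (ZMod 2)) ∈ nonZeroDivisors (Polynomial (ZMod 2)) :=
    mem_nonZeroDivisors_of_ne_zero (pow_ne_zero 2 X_ne_zero)
  refine ⟨exists_greatest_gnt gM hMint huM hrkM, exists_greatest_gnt gN hNint huN hrkN,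
    fun sM sN hsM hsN => ?_⟩
  -- transfer of non-torsion through σ
  have key : ∀ {P Q : Type} [AddCommGroup P] [AddCommGroup Q]
      [Module (Polynomial (ZMod 2)) P] [Module (Polynomial (ZMod 2)) Q]
      (f : P →ₗ[Polynomial (ZMod 2)] Q) (r : Q →ₗ[Polynomial (ZMod 2)] P)
      (hrf : ∀ x : P, r (f x) = (X ^ 2 : Polynomial (ZMod 2)) • x)
      (x : P), x ∉ Submodule.torsion (Polynomial (ZMod 2)) P →
      f x ∉ Submodule.torsion (Polynomial (ZMod 2)) Q := by
    intro P Q _ _ _ _ f r hrf x hx hfx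
    apply hx
    obtain ⟨a, ha⟩ := (Submodule.mem_torsion_iff _).mp hfx
    refine (Submodule.mem_torsion_iff _).mpr ⟨⟨(a : Polynomial (ZMod 2)) * X ^ 2,
      mul_mem a.2 hX2⟩, ?_⟩
    have ha' : (a : Polynomial (ZMod 2)) • f x = 0 := ha
    have : r ((a : Polynomial (ZMod 2)) • f x) = 0 := by rw [ha', map_zero]
    rw [map_smul, hrf, smul_smul] at this
    exact this
  have hMN : sM - 1 ≤ sN := by
    obtain ⟨d, x, hxg, hxt⟩ := hsM.1
    exact hsN.2 ⟨d - 1, σ x, by simpa using hσ (d, sM) x hxg, key σ μ hμσ x hxt⟩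
  have hNM : sN - 1 ≤ sM := by
    obtain ⟨d, y, hyg, hyt⟩ := hsN.1
    exact hsM.2 ⟨d - 1, μ y, by simpa using hμ (d, sN) y hyg, key μ σ hσμ y hyt⟩
  rw [abs_le]
  omega
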